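/- Let m > 0, β > 1 with β ≥ max(1 + 1/α, 2 - m) for some α > 0, and set p = 1/(β-1). Let r̄ > 0, s0 ∈ (0,1), and suppose f : [0,1] → ℝ is continuous with f(s) ≤ r̄ s^β for all 0 ≤ s ≤ s0 and f bounded on [0,1]. Then for every K > 1 there exists c > 0 such that the function w(z) = K/z^p satisfies (w^m)''(z) + c w'(z) + f(w(z)) ≤ 0 for all z ≥ K^{1/p}. -/

import Mathlib

open Real

private lemma deriv_congr_Ioi {F G : ℝ → ℝ} {z : ℝ} (hz : 0 < z)
    (h : ∀ y ∈ Set.Ioi (0:ℝ), F y = G y) :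
    deriv F z = deriv G z :=
  (Filter.eventuallyEq_of_mem (isOpen_Ioi.mem_nhds hz) h).deriv_eq

private lemma deriv2_congr_Ioi {F G : ℝ → ℝ} {z : ℝ} (hz : 0 < z)
    (h : ∀ y ∈ Set.Ioi (0:ℝ), F y = G y) :
    deriv (deriv F) z = deriv (deriv G) z := by
  have h1 : F =ᶠ[nhds z] G := Filter.eventuallyEq_of_mem (isOpen_Ioi.mem_nhds hz) h
  exact h1.deriv.deriv_eq

private lemma deriv_const_rpow' (b a : ℝ) {y : ℝ} (hy : 0 < y) :
    deriv (fun x : ℝ => b * x ^ a) y = b * a * y ^ (a - 1) := by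
  have h := (Real.hasDerivAt_rpow_const (p := a) (Or.inl hy.ne')).const_mul b
  rw [h.deriv]; ring

private lemma deriv2_const_rpow (b a : ℝ) {z : ℝ} (hz : 0 < z) :
    deriv (deriv (fun x : ℝ => b * x ^ a)) z = b * a * (a - 1) * z ^ (a - 2) := by
  have h1 : deriv (fun x : ℝ => b * x ^ a) =ᶠ[nhds z] fun x : ℝ => b * a * x ^ (a - 1) :=
    Filter.eventuallyEq_of_mem (isOpen_Ioi.mem_nhds hz)
      (fun y hy => deriv_const_rpow' b a hy)
  rw [h1.deriv_eq, deriv_const_rpow' (b * a) (a - 1) hz,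
    show a - 1 - 1 = a - 2 from by ring]

set_option maxHeartbeats 1000000 in
theorem stmt_4 (m α β rbar s0 : ℝ) (f : ℝ → ℝ) (hm : 0 < m) (hα : 0 < α) (hβ : 1 < β)
    (hβ' : max (1 + 1 / α) (2 - m) ≤ β) (hr : 0 < rbar) (hs0 : s0 ∈ Set.Ioo (0 : ℝ) 1)
    (hf : ContinuousOn f (Set.Icc 0 1))
    (hfle : ∀ s : ℝ, 0 ≤ s → s ≤ s0 → f s ≤ rbar * s ^ β)
    (hfb : ∃ M : ℝ, ∀ s ∈ Set.Icc (0 : ℝ) 1, |f s| ≤ M) :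
    ∀ K : ℝ, 1 < K → ∃ c : ℝ, 0 < c ∧ ∀ z : ℝ, K ^ (β - 1) ≤ z →
      deriv (deriv (fun y : ℝ => (K / y ^ (1 / (β - 1))) ^ m)) z
        + c * deriv (fun y : ℝ => K / y ^ (1 / (β - 1))) z
        + f (K / z ^ (1 / (β - 1))) ≤ 0 := by
  intro K hK
  obtain ⟨M, hM⟩ := hfb
  set p := 1 / (β - 1) with hpdef
  have hβ1 : 0 < β - 1 := by linarith
  have hp : 0 < p := by rw [hpdef]; positivity
  have hK0 : (0:ℝ) < K := by linarith
  have hM0 : 0 ≤ M := le_trans (abs_nonneg _) (hM 0 ⟨le_refl 0, zero_le_one⟩)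
  have hs00 : 0 < s0 := hs0.1
  set A := K ^ m * (p * m) * (p * m + 1) with hAdef
  have hA0 : 0 < A := by
    have := Real.rpow_pos_of_pos hK0 m
    rw [hAdef]; positivity
  set D := (K / s0) ^ ((p + 1) / p) with hDdef
  have hD0 : 0 < D := Real.rpow_pos_of_pos (by positivity) _
  set C := max (rbar * K ^ β) (M * D) with hCdef
  have hC0 : 0 < C := lt_of_lt_of_le
    (by have := Real.rpow_pos_of_pos hK0 β; positivity) (le_max_left _ _)
  have hKp : (0:ℝ) < K * p := by positivity
  refine ⟨(A + C + 1) / (K * p), by positivity, ?_⟩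
  intro z hz
  have hz1 : 1 < z :=
    lt_of_lt_of_le ((Real.one_lt_rpow_iff_of_pos hK0).mpr (Or.inl ⟨hK, hβ1⟩)) hz
  have hz0 : 0 < z := lt_trans one_pos hz1
  -- rewrite the derivatives
  have hKeq : ∀ y ∈ Set.Ioi (0:ℝ), K / y ^ p = K * y ^ (-p) := fun y hy => by
    rw [Real.rpow_neg (le_of_lt hy), div_eq_mul_inv]
  have hKeqm : ∀ y ∈ Set.Ioi (0:ℝ), (K / y ^ p) ^ m = K ^ m * y ^ (-p * m) := fun y hy => by
    rw [hKeq y hy, Real.mul_rpow hK0.le (Real.rpow_nonneg (le_of_lt hy) _),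
      ← Real.rpow_mul (le_of_lt hy)]
  have e1 : deriv (deriv (fun y : ℝ => (K / y ^ p) ^ m)) z
      = A * z ^ (-p * m - 2) := by
    rw [deriv2_congr_Ioi (F := fun y : ℝ => (K / y ^ p) ^ m)
      (G := fun y : ℝ => K ^ m * y ^ (-p * m)) hz0 hKeqm,
      deriv2_const_rpow _ _ hz0, hAdef]
    ring
  have e2 : deriv (fun y : ℝ => K / y ^ p) z = K * (-p) * z ^ (-p - 1) := by
    rw [deriv_congr_Ioi (F := fun y : ℝ => K / y ^ p)
      (G := fun y : ℝ => K * y ^ (-p)) hz0 hKeq,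
      deriv_const_rpow' _ _ hz0]
  rw [e1, e2]
  set Z := z ^ (-p - 1) with hZdef
  have hZ0 : 0 < Z := Real.rpow_pos_of_pos hz0 _
  -- second derivative bound
  have h2m : 2 - m ≤ β := le_trans (le_max_right _ _) hβ'
  have hpm : p * (1 - m) ≤ 1 := by
    rw [hpdef, div_mul_eq_mul_div, one_mul, div_le_one hβ1]; linarith
  have hexp : -p * m - 2 ≤ -p - 1 := by nlinarith
  have h1 : z ^ (-p * m - 2) ≤ Z := Real.rpow_le_rpow_of_exponent_le hz1.le hexp
  -- bounds on w = K / z^p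
  have hzp0 : 0 < z ^ p := Real.rpow_pos_of_pos hz0 _
  have hzpK : K ≤ z ^ p := by
    have h := Real.rpow_le_rpow (Real.rpow_nonneg hK0.le _) hz hp.le
    rwa [← Real.rpow_mul hK0.le, show (β - 1) * p = 1 by
      rw [hpdef]; field_simp, Real.rpow_one] at h
  have hw0 : 0 < K / z ^ p := div_pos hK0 hzp0
  have hw1 : K / z ^ p ≤ 1 := (div_le_one hzp0).mpr hzpK
  -- f bound
  have hfw : f (K / z ^ p) ≤ C * Z := by
    by_cases hws : K / z ^ p ≤ s0
    · have h := hfle _ hw0.le hws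
      have hwβ : (K / z ^ p) ^ β = K ^ β * Z := by
        rw [Real.div_rpow hK0.le hzp0.le, ← Real.rpow_mul hz0.le,
          show p * β = p + 1 by rw [hpdef]; field_simp; ring,
          hZdef, show -p - 1 = -(p + 1) by ring, Real.rpow_neg hz0.le,
          div_eq_mul_inv]
      rw [hwβ] at h
      calc f (K / z ^ p) ≤ rbar * (K ^ β * Z) := h
        _ = rbar * K ^ β * Z := by ring
        _ ≤ C * Z := mul_le_mul_of_nonneg_right (le_max_left _ _) hZ0.le
    · push_neg at hws
      have hfM : f (K / z ^ p) ≤ M :=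
        le_trans (le_abs_self _) (hM _ ⟨hw0.le, hw1⟩)
      have hzpD : z ^ (p + 1) ≤ D := by
        have hlt : z ^ p ≤ K / s0 := by
          rw [le_div_iff₀ hs00]
          nlinarith [(lt_div_iff₀ hzp0).mp hws]
        calc z ^ (p + 1) = (z ^ p) ^ ((p + 1) / p) := by
              rw [← Real.rpow_mul hz0.le, mul_div_cancel₀ _ hp.ne']
          _ ≤ (K / s0) ^ ((p + 1) / p) :=
              Real.rpow_le_rpow hzp0.le hlt (by positivity)
          _ = D := hDdef.symm
      have hDZ : 1 ≤ D * Z := by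
        have hzinv : D⁻¹ ≤ Z := by
          rw [hZdef, show -p - 1 = -(p + 1) by ring, Real.rpow_neg hz0.le]
          exact inv_anti₀ (Real.rpow_pos_of_pos hz0 _) hzpD
        calc (1:ℝ) = D * D⁻¹ := (mul_inv_cancel₀ hD0.ne').symm
          _ ≤ D * Z := mul_le_mul_of_nonneg_left hzinv hD0.le
      calc f (K / z ^ p) ≤ M := hfM
        _ ≤ M * (D * Z) := le_mul_of_one_le_right hM0 hDZ
        _ = M * D * Z := by ring
        _ ≤ C * Z := mul_le_mul_of_nonneg_right (le_max_right _ _) hZ0.le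
  -- combine
  have hterm : (A + C + 1) / (K * p) * (K * -p * Z) = -((A + C + 1) * Z) := by
    field_simp
  have hAz : A * z ^ (-p * m - 2) ≤ A * Z := mul_le_mul_of_nonneg_left h1 hA0.le
  linarith [hZ0, hAz, hfw, hterm]
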